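/- (Homological lemma.) Let v ∈ ℂ^d, let δ ∈ ℂ^W, and let β̂, β̃ ∈ ℂ^W satisfy β̂_∅ = β̃_∅ = 0, ξ_v β̂ = 0, and ξ_v β̃ = 0. If ξ_v δ = δ★β̂ − β̃★δ, then ξ_v δ = 0. -/
import Mathlib


open scoped BigOperators

/-- Convolution product on `ℂ^W`: `(δ★δ′)_w = Σ_{w=w₁w₂} δ_{w₁} δ′_{w₂}`. -/
noncomputable def conv {A : Type*} (x y : List A → ℂ) : List A → ℂ :=
  fun w => ∑ i ∈ Finset.range (w.length + 1), x (w.take i) * y (w.drop i)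

/-- Shuffle product of two words, as a multiset of words. -/
def shuffle {A : Type*} : List A → List A → Multiset (List A)
  | [], w => {w}
  | w, [] => {w}
  | a :: u, b :: v =>
      ((shuffle u (b :: v)).map (a :: ·)) + ((shuffle (a :: u) v).map (b :: ·))

/-- Membership in the group `G`: the shuffle relations with `γ_∅ = 1`. -/
def isGrp {A : Type*} (γ : List A → ℂ) : Prop :=
  γ [] = 1 ∧ ∀ w w' : List A, γ w * γ w' = ((shuffle w w').map γ).sum

/-- Membership in the Lie algebra `𝔤`. -/
def isLie {A : Type*} (β : List A → ℂ) : Prop :=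
  β [] = 0 ∧ ∀ w w' : List A, w ≠ [] → w' ≠ [] → ((shuffle w w').map β).sum = 0

/-- The unit `1` of the convolution product. -/
def unitCW {A : Type*} : List A → ℂ := fun w => match w with | [] => 1 | _ => 0

/-- `ν^v_ℓ = Σ_j v_j ν_{j,ℓ}` for a letter `ℓ`. -/
noncomputable def nuL {A : Type*} {d : ℕ} (ν : Fin d → A → ℂ) (v : Fin d → ℂ) (ℓ : A) : ℂ :=
  ∑ j, v j * ν j ℓ

/-- `ν^v_w = ν^v_{ℓ₁} + ⋯ + ν^v_{ℓ_n}` for a word `w = ℓ₁⋯ℓ_n`. -/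
noncomputable def nuW {A : Type*} {d : ℕ} (ν : Fin d → A → ℂ) (v : Fin d → ℂ) (w : List A) : ℂ :=
  (w.map (nuL ν v)).sum

/-- The operator `Ξ_v`: `(Ξ_v δ)_w = exp(ν^v_w) δ_w`. -/
noncomputable def XiOp {A : Type*} {d : ℕ} (ν : Fin d → A → ℂ) (v : Fin d → ℂ)
    (δ : List A → ℂ) : List A → ℂ :=
  fun w => Complex.exp (nuW ν v w) * δ w

/-- The operator `ξ_v`: `(ξ_v δ)_w = ν^v_w δ_w`. -/
noncomputable def xiOp {A : Type*} {d : ℕ} (ν : Fin d → A → ℂ) (v : Fin d → ℂ)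
    (δ : List A → ℂ) : List A → ℂ :=
  fun w => nuW ν v w * δ w

/-- homological lemma. If `β̂_∅ = β̃_∅ = 0`, `ξ_v β̂ = 0`, `ξ_v β̃ = 0`
and `ξ_v δ = δ★β̂ − β̃★δ`, then `ξ_v δ = 0`. -/
theorem stmt15 {A : Type*} [Countable A] {d : ℕ} (hd : 1 ≤ d) (ν : Fin d → A → ℂ)
    (v : Fin d → ℂ) (δ βhat βtil : List A → ℂ)
    (h₁ : βhat [] = 0) (h₂ : βtil [] = 0)
    (h₃ : xiOp ν v βhat = 0) (h₄ : xiOp ν v βtil = 0)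
    (h₅ : xiOp ν v δ = conv δ βhat - conv βtil δ) :
    xiOp ν v δ = 0 := by
  have hβh : ∀ u : List A, nuW ν v u * βhat u = 0 := fun u => congrFun h₃ u
  have hβt : ∀ u : List A, nuW ν v u * βtil u = 0 := fun u => congrFun h₄ u
  have hsplit : ∀ (w : List A) (i : ℕ),
      nuW ν v (w.take i) + nuW ν v (w.drop i) = nuW ν v w := by
    intro w i
    conv_rhs => rw [← List.take_append_drop i w]
    simp [nuW]
  suffices H : ∀ n (w : List A), w.length = n → nuW ν v w * δ w = 0 by
    funext w; exact H w.length w rfl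
  intro n
  induction n using Nat.strong_induction_on with
  | _ n ih =>
    intro w hw
    rcases eq_or_ne (nuW ν v w) 0 with hν | hν
    · simp [hν]
    have hx := congrFun h₅ w
    simp only [xiOp, conv, Pi.sub_apply] at hx
    rw [hx]
    have hS1 : ∀ i ∈ Finset.range (w.length + 1), δ (w.take i) * βhat (w.drop i) = 0 := by
      intro i hi
      rw [Finset.mem_range] at hi
      rcases eq_or_lt_of_le (Nat.lt_succ_iff.mp hi) with hin | hin
      · have : w.drop i = [] := List.drop_eq_nil_of_le (by omega)
        rw [this, h₁, mul_zero]
      · rcases eq_or_ne (nuW ν v (w.take i)) 0 with h0 | h0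
        · have : nuW ν v (w.drop i) ≠ 0 := by
            have := hsplit w i; rw [h0, zero_add] at this; rw [this]; exact hν
          have := hβh (w.drop i)
          rcases mul_eq_zero.mp this with h | h
          · exact absurd h ‹_›
          · rw [h, mul_zero]
        · have hlen : (w.take i).length < n := by
            rw [List.length_take, hw]; omega
          have := ih _ hlen (w.take i) rfl
          rcases mul_eq_zero.mp this with h | h
          · exact absurd h h0
          · rw [h, zero_mul]
    have hS2 : ∀ i ∈ Finset.range (w.length + 1), βtil (w.take i) * δ (w.drop i) = 0 := by
      intro i hi
      rcases Nat.eq_zero_or_pos i with h0 | h0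
      · subst h0; simp [h₂]
      · rcases eq_or_ne (nuW ν v (w.drop i)) 0 with hz | hz
        · have : nuW ν v (w.take i) ≠ 0 := by
            have := hsplit w i; rw [hz, add_zero] at this; rw [this]; exact hν
          have := hβt (w.take i)
          rcases mul_eq_zero.mp this with h | h
          · exact absurd h ‹_›
          · rw [h, zero_mul]
        · have hlen : (w.drop i).length < n := by
            rw [List.length_drop, hw]
            have : w ≠ [] := by
              intro h; rw [h] at hν; simp [nuW] at hν
            have : 0 < n := by
              rw [← hw]; exact List.length_pos_iff.mpr this
            omega
          have := ih _ hlen (w.drop i) rfl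
          rcases mul_eq_zero.mp this with h | h
          · exact absurd h hz
          · rw [h, mul_zero]
    rw [Finset.sum_eq_zero hS1, Finset.sum_eq_zero hS2, sub_zero]
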